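/- The dunce hat, obtained from a solid triangle by identifying its three boundary edges non-coherently (two with the same orientation and one with opposite orientation), is contractible. -/

import Mathlib

open Finset
set_option linter.unusedSectionVars false
set_option maxHeartbeats 1000000

/-- The standard 2-simplex. -/
def Simplex2 : Set (Fin 3 → ℝ) := {x | (∀ i, 0 ≤ x i) ∧ ∑ i, x i = 1}

/-- Parametrization of the edge from vertex `a` to vertex `b`. -/
def eAB (t : ℝ) : Fin 3 → ℝ := ![1 - t, t, 0]
/-- Parametrization of the edge from vertex `a` to vertex `c`. -/
def eAC (t : ℝ) : Fin 3 → ℝ := ![1 - t, 0, t]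
/-- Parametrization of the edge from vertex `c` to vertex `b`. -/
def eCB (t : ℝ) : Fin 3 → ℝ := ![0, t, 1 - t]

/-- The identification `ab ~ ac ~ cb` of the three boundary edges of the
triangle (two with the same orientation, one with the opposite one). -/
def dunceRel (p q : Simplex2) : Prop :=
  ∃ t : ℝ, 0 ≤ t ∧ t ≤ 1 ∧
    ((p.val = eAB t ∧ q.val = eAC t) ∨ (p.val = eAB t ∧ q.val = eCB t) ∨
      (p.val = eAC t ∧ q.val = eCB t))

/-- The dunce hat, as a quotient space of the solid triangle. -/
abbrev DunceHat : Type := Quot dunceRel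

namespace DH

noncomputable section

/-- clamp to `[0,1]` -/
def cl (x : ℝ) : ℝ := max 0 (min 1 x)
/-- clamp to `[0,1/2]` -/
def clh (x : ℝ) : ℝ := max 0 (min (1/2) x)
/-- clamp to `[0,1/3]` -/
def cl3 (x : ℝ) : ℝ := max 0 (min (1/3) x)
/-- clamp to `[1/3,2/3]` -/
def clm (x : ℝ) : ℝ := max (1/3) (min (2/3) x)

lemma cl_nonneg (x : ℝ) : 0 ≤ cl x := le_max_left _ _
lemma cl_le_one (x : ℝ) : cl x ≤ 1 := max_le (by norm_num) (min_le_left _ _)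
lemma cl_of (x : ℝ) (h0 : 0 ≤ x) (h1 : x ≤ 1) : cl x = x := by
  unfold cl; rw [min_eq_right h1, max_eq_right h0]
lemma clh_nonneg (x : ℝ) : 0 ≤ clh x := le_max_left _ _
lemma clh_le_half (x : ℝ) : clh x ≤ 1/2 := max_le (by norm_num) (min_le_left _ _)
lemma clh_of (x : ℝ) (h0 : 0 ≤ x) (h1 : x ≤ 1/2) : clh x = x := by
  unfold clh; rw [min_eq_right h1, max_eq_right h0]
lemma cl3_nonneg (x : ℝ) : 0 ≤ cl3 x := le_max_left _ _
lemma cl3_le (x : ℝ) : cl3 x ≤ 1/3 := max_le (by norm_num) (min_le_left _ _)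
lemma cl3_of (x : ℝ) (h0 : 0 ≤ x) (h1 : x ≤ 1/3) : cl3 x = x := by
  unfold cl3; rw [min_eq_right h1, max_eq_right h0]
lemma clm_ge (x : ℝ) : 1/3 ≤ clm x := le_max_left _ _
lemma clm_le (x : ℝ) : clm x ≤ 2/3 := max_le (by norm_num) (min_le_left _ _)
lemma clm_of (x : ℝ) (h0 : 1/3 ≤ x) (h1 : x ≤ 2/3) : clm x = x := by
  unfold clm; rw [min_eq_right h1, max_eq_right h0]
lemma cl_nonpos (x : ℝ) (h : x ≤ 0) : cl x = 0 := by
  unfold cl; rw [max_eq_left (le_trans (min_le_right _ _) h)]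
lemma cl_ge_one (x : ℝ) (h : 1 ≤ x) : cl x = 1 := by
  unfold cl; rw [min_eq_left h]; norm_num
lemma cl_cl (x : ℝ) : cl (cl x) = cl x := cl_of _ (cl_nonneg x) (cl_le_one x)

@[fun_prop] lemma cont_cl : Continuous cl := by unfold cl; fun_prop
@[fun_prop] lemma cont_clh : Continuous clh := by unfold clh; fun_prop
@[fun_prop] lemma cont_cl3 : Continuous cl3 := by unfold cl3; fun_prop
@[fun_prop] lemma cont_clm : Continuous clm := by unfold clm; fun_prop

lemma eAB_mem (t : ℝ) (h0 : 0 ≤ t) (h1 : t ≤ 1) : eAB t ∈ Simplex2 := by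
  constructor
  · intro i; fin_cases i <;> simp [eAB] <;> linarith
  · simp [Fin.sum_univ_three, eAB]

lemma eAC_mem (t : ℝ) (h0 : 0 ≤ t) (h1 : t ≤ 1) : eAC t ∈ Simplex2 := by
  constructor
  · intro i; fin_cases i <;> simp [eAC] <;> linarith
  · simp [Fin.sum_univ_three, eAC]

lemma eCB_mem (t : ℝ) (h0 : 0 ≤ t) (h1 : t ≤ 1) : eCB t ∈ Simplex2 := by
  constructor
  · intro i; fin_cases i <;> simp [eCB] <;> linarith
  · simp [Fin.sum_univ_three, eCB]

/-- boundary parametrization -/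
def bet (θ : ℝ) : Fin 3 → ℝ :=
  if θ ≤ 1/3 then eAB (3*θ) else if θ ≤ 2/3 then eCB (2-3*θ) else eAC (3-3*θ)

lemma bet_mem (θ : ℝ) (h0 : 0 ≤ θ) (h1 : θ ≤ 1) : bet θ ∈ Simplex2 := by
  unfold bet; split_ifs with ha hb
  · exact eAB_mem _ (by linarith) (by linarith)
  · exact eCB_mem _ (by linarith) (by linarith)
  · exact eAC_mem _ (by linarith) (by linarith)

lemma bet_zero : bet 0 = eAB 0 := by unfold bet; norm_num
lemma bet_one : bet 1 = eAB 0 := by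
  unfold bet; norm_num
  funext i; fin_cases i <;> simp [eAB, eAC]

/-- cone parametrization of the triangle -/
def Phi (ρ θ : ℝ) : Fin 3 → ℝ := fun i => (1-ρ) * (1/3) + ρ * bet θ i

lemma Phi_mem (ρ θ : ℝ) (hρ0 : 0 ≤ ρ) (hρ1 : ρ ≤ 1) (hθ0 : 0 ≤ θ) (hθ1 : θ ≤ 1) :
    Phi ρ θ ∈ Simplex2 := by
  obtain ⟨hb0, hb1⟩ := bet_mem θ hθ0 hθ1
  constructor
  · intro i
    have := hb0 i
    have : 0 ≤ ρ * bet θ i := mul_nonneg hρ0 this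
    unfold Phi; nlinarith
  · unfold Phi
    rw [Fin.sum_univ_three]
    have : bet θ 0 + bet θ 1 + bet θ 2 = 1 := by
      rw [Fin.sum_univ_three] at hb1; exact hb1
    nlinarith

/-- the quotient map, as a function on raw data -/
def mkS (x : Fin 3 → ℝ) (h : x ∈ Simplex2) : DunceHat := Quot.mk dunceRel ⟨x, h⟩

lemma mkS_congr {x y : Fin 3 → ℝ} (h : x = y) (hx : x ∈ Simplex2) (hy : y ∈ Simplex2) :
    mkS x hx = mkS y hy := by subst h; rfl

lemma mk_AB_AC (t : ℝ) (h0 : 0 ≤ t) (h1 : t ≤ 1) (hx : eAB t ∈ Simplex2)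
    (hy : eAC t ∈ Simplex2) : mkS (eAB t) hx = mkS (eAC t) hy :=
  Quot.sound ⟨t, h0, h1, Or.inl ⟨rfl, rfl⟩⟩
lemma mk_AB_CB (t : ℝ) (h0 : 0 ≤ t) (h1 : t ≤ 1) (hx : eAB t ∈ Simplex2)
    (hy : eCB t ∈ Simplex2) : mkS (eAB t) hx = mkS (eCB t) hy :=
  Quot.sound ⟨t, h0, h1, Or.inr (Or.inl ⟨rfl, rfl⟩)⟩
lemma mk_AC_CB (t : ℝ) (h0 : 0 ≤ t) (h1 : t ≤ 1) (hx : eAC t ∈ Simplex2)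
    (hy : eCB t ∈ Simplex2) : mkS (eAC t) hx = mkS (eCB t) hy :=
  Quot.sound ⟨t, h0, h1, Or.inr (Or.inr ⟨rfl, rfl⟩)⟩

/-- the loop in the dunce hat -/
def alph (t : ℝ) : DunceHat := mkS (eAB (cl t)) (eAB_mem _ (cl_nonneg t) (cl_le_one t))

/-- the disc-coordinates map into the dunce hat -/
def P (ρ θ : ℝ) : DunceHat :=
  mkS (Phi (cl ρ) (cl θ))
    (Phi_mem _ _ (cl_nonneg ρ) (cl_le_one ρ) (cl_nonneg θ) (cl_le_one θ))

lemma alph_cl (t : ℝ) : alph (cl t) = alph t :=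
  mkS_congr (congrArg eAB (cl_cl t)) _ _

lemma alph_01 : alph (0:ℝ) = alph 1 := by
  unfold alph
  calc mkS (eAB (cl 0)) _ = mkS (eAB 0) (eAB_mem 0 le_rfl zero_le_one) :=
        mkS_congr (congrArg eAB (cl_of 0 le_rfl zero_le_one)) _ _
    _ = mkS (eCB 0) (eCB_mem 0 le_rfl zero_le_one) := mk_AB_CB 0 le_rfl zero_le_one _ _
    _ = mkS (eAC 1) (eAC_mem 1 zero_le_one le_rfl) :=
        mkS_congr (by funext i; fin_cases i <;> simp [eCB, eAC]) _ _
    _ = mkS (eAB 1) (eAB_mem 1 zero_le_one le_rfl) :=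
        (mk_AB_AC 1 zero_le_one le_rfl _ _).symm
    _ = mkS (eAB (cl 1)) _ :=
        mkS_congr (congrArg eAB (cl_of 1 zero_le_one le_rfl).symm) _ _

lemma alph_nonpos {t : ℝ} (h : t ≤ 0) : alph t = alph 0 := by
  unfold alph
  exact mkS_congr (congrArg eAB (by rw [cl_nonpos t h, cl_of 0 le_rfl zero_le_one])) _ _
lemma alph_ge_one {t : ℝ} (h : 1 ≤ t) : alph t = alph 0 := by
  have h1 : alph t = alph 1 := by
    unfold alph
    exact mkS_congr (congrArg eAB (by rw [cl_ge_one t h, cl_of 1 zero_le_one le_rfl])) _ _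
  rw [h1, ← alph_01]

@[fun_prop] lemma cont_eAB : Continuous eAB := by
  apply continuous_pi
  intro i; fin_cases i <;> simp [eAB] <;> fun_prop

@[fun_prop] lemma cont_alph : Continuous alph := by
  unfold alph mkS
  apply (continuous_quot_mk).comp
  apply Continuous.subtype_mk
  exact cont_eAB.comp cont_cl

@[fun_prop] lemma cont_bet : Continuous bet := by
  unfold bet
  apply Continuous.if_le
  · exact cont_eAB.comp (by fun_prop)
  · apply Continuous.if_le
    · have : Continuous eCB := by
        apply continuous_pi; intro i; fin_cases i <;> simp [eCB] <;> fun_prop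
      exact this.comp (by fun_prop)
    · have : Continuous eAC := by
        apply continuous_pi; intro i; fin_cases i <;> simp [eAC] <;> fun_prop
      exact this.comp (by fun_prop)
    · fun_prop
    · fun_prop
    · intro x hx; subst hx
      funext i; fin_cases i <;> simp [eCB, eAC] <;> norm_num
  · fun_prop
  · fun_prop
  · intro x hx; subst hx
    funext i; fin_cases i <;> simp [eAB, eCB] <;> norm_num <;> rfl

lemma cont_P : Continuous fun p : ℝ × ℝ => P p.1 p.2 := by
  unfold P mkS
  apply (continuous_quot_mk).comp
  apply Continuous.subtype_mk
  apply continuous_pi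
  intro i
  have hb : Continuous fun p : ℝ × ℝ => bet (cl p.2) i :=
    (continuous_apply i).comp (cont_bet.comp (cont_cl.comp continuous_snd))
  unfold Phi
  have hc : Continuous fun p : ℝ × ℝ => cl p.1 := cont_cl.comp continuous_fst
  fun_prop

end
end DH
namespace DH
noncomputable section

lemma alph_val (t : ℝ) (h0 : 0 ≤ t) (h1 : t ≤ 1) :
    alph t = mkS (eAB t) (eAB_mem t h0 h1) := mkS_congr (congrArg eAB (cl_of t h0 h1)) _ _

lemma Phi_one (θ : ℝ) : Phi 1 θ = bet θ := by funext i; unfold Phi; ring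

lemma P_one (ψ : ℝ) :
    P 1 ψ = mkS (bet (cl ψ)) (bet_mem _ (cl_nonneg ψ) (cl_le_one ψ)) := by
  unfold P
  exact mkS_congr (by rw [cl_of 1 zero_le_one le_rfl, Phi_one]) _ _

lemma Phi_zero (θ : ℝ) : Phi 0 θ = Phi 0 0 := by funext i; unfold Phi; ring

lemma P_zero (θ : ℝ) : P 0 θ = P 0 0 := by
  unfold P
  exact mkS_congr (by rw [cl_of 0 le_rfl zero_le_one, Phi_zero]) _ _

lemma P_theta01 (ρ : ℝ) : P ρ 0 = P ρ 1 := by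
  unfold P
  apply mkS_congr
  rw [cl_of 0 le_rfl zero_le_one, cl_of 1 zero_le_one le_rfl]
  funext i; unfold Phi; rw [bet_zero, bet_one]

lemma clh_cl (τ : ℝ) : clh (cl τ) = clh τ := by
  rcases le_total τ 0 with h | h
  · rw [cl_nonpos τ h]
    have h2 : clh τ = 0 := by
      unfold clh; rw [max_eq_left (le_trans (min_le_right _ _) h)]
    have h3 : clh 0 = 0 := clh_of 0 le_rfl (by norm_num)
    rw [h2, h3]
  · rcases le_total τ (1/2) with h2 | h2
    · rw [cl_of τ h (by linarith)]
    · have e1 : clh τ = 1/2 := by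
        unfold clh; rw [min_eq_left h2]; norm_num
      have hcl : (1/2:ℝ) ≤ cl τ :=
        le_max_of_le_right (le_min (by norm_num) h2)
      have e2 : clh (cl τ) = 1/2 := by
        unfold clh; rw [min_eq_left hcl]; norm_num
      rw [e1, e2]

lemma half_le_cl_iff (τ : ℝ) : (1/2 : ℝ) ≤ cl τ ↔ (1/2:ℝ) ≤ τ := by
  constructor
  · intro h
    rcases le_max_iff.1 h with h | h
    · linarith
    · exact (le_min_iff.1 h).2
  · intro h
    exact le_max_of_le_right (le_min (by norm_num) h)

/-- the key homotopy of circle loops, from the attaching word to a reflection -/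
def Hh (ψ τ : ℝ) : DunceHat :=
  if 1/2 ≤ τ then
    (if ψ ≤ 2/3 then alph ((2*cl τ - 1) * min (3*ψ) (2-3*ψ)) else alph (3-3*ψ))
  else
    (if ψ ≤ 4*clh τ/3 then alph 0 else alph ((1-ψ)/(1-4*clh τ/3)))

lemma denom_ne (τ : ℝ) : (1:ℝ) - 4*clh τ/3 ≠ 0 := by
  have := clh_le_half τ; intro h; nlinarith

lemma denom_pos (τ : ℝ) : (0:ℝ) < 1 - 4*clh τ/3 := by
  have := clh_le_half τ; nlinarith

lemma Hh_cl (ψ τ : ℝ) : Hh ψ (cl τ) = Hh ψ τ := by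
  unfold Hh
  rw [clh_cl, cl_cl]
  by_cases h : (1/2:ℝ) ≤ τ
  · rw [if_pos h, if_pos ((half_le_cl_iff τ).2 h)]
  · rw [if_neg h, if_neg (fun hc => h ((half_le_cl_iff τ).1 hc))]

lemma Hh_edge0 (τ : ℝ) : Hh 0 τ = alph 0 := by
  unfold Hh
  split_ifs with h h1 h2
  · have e : (2*cl τ - 1) * min (3*(0:ℝ)) (2-3*0) = 0 := by norm_num
    rw [e]
  · exact absurd (by norm_num : (0:ℝ) ≤ 2/3) h1
  · rfl
  · refine absurd ?_ h2
    have := clh_nonneg τ; positivity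

lemma Hh_edge1 (τ : ℝ) : Hh 1 τ = alph 0 := by
  unfold Hh
  split_ifs with h h1 h2
  · exact absurd h1 (by norm_num)
  · norm_num
  · have := clh_le_half τ; linarith
  · have e : ((1:ℝ)-1)/(1-4*clh τ/3) = 0 := by norm_num
    rw [e]

lemma Hh_one (ψ τ : ℝ) (h : 1 ≤ τ) : Hh ψ τ = P 1 ψ := by
  unfold Hh
  rw [if_pos (by linarith : (1:ℝ)/2 ≤ τ), cl_ge_one τ h, P_one]
  split_ifs with hψ
  · rcases le_or_gt ψ 0 with h0 | h0
    · have hmin : min (3*ψ) (2-3*ψ) = 3*ψ := min_eq_left (by linarith)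
      rw [hmin]
      have e1 : alph ((2*1-1)*(3*ψ)) = alph 0 := alph_nonpos (by nlinarith)
      rw [e1, alph_val 0 le_rfl zero_le_one]
      exact mkS_congr (by rw [cl_nonpos ψ h0, bet_zero]) _ _
    · rcases le_or_gt ψ (1/3) with h13 | h13
      · have hmin : min (3*ψ) (2-3*ψ) = 3*ψ := min_eq_left (by linarith)
        rw [hmin]
        have e1 : alph ((2*1-1)*(3*ψ)) = alph (3*ψ) := by norm_num
        rw [e1, alph_val (3*ψ) (by linarith) (by linarith)]
        apply mkS_congr
        rw [cl_of ψ (by linarith) (by linarith)]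
        unfold bet
        rw [if_pos h13]
      · have hmin : min (3*ψ) (2-3*ψ) = 2-3*ψ := min_eq_right (by linarith)
        rw [hmin]
        have e1 : alph ((2*1-1)*(2-3*ψ)) = alph (2-3*ψ) := by norm_num
        rw [e1, alph_val (2-3*ψ) (by linarith) (by linarith)]
        have hb : bet (cl ψ) = eCB (2-3*ψ) := by
          rw [cl_of ψ (by linarith) (by linarith)]
          unfold bet
          rw [if_neg (by linarith), if_pos hψ]
        calc mkS (eAB (2-3*ψ)) _
            = mkS (eCB (2-3*ψ)) (eCB_mem _ (by linarith) (by linarith)) :=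
              mk_AB_CB _ (by linarith) (by linarith) _ _
          _ = mkS (bet (cl ψ)) _ := mkS_congr hb.symm _ _
  · rcases le_or_gt ψ 1 with h1' | h1'
    · rw [alph_val (3-3*ψ) (by linarith) (by linarith)]
      have hb : bet (cl ψ) = eAC (3-3*ψ) := by
        rw [cl_of ψ (by linarith) h1']
        unfold bet
        rw [if_neg (by linarith), if_neg (by linarith)]
      calc mkS (eAB (3-3*ψ)) _
          = mkS (eAC (3-3*ψ)) (eAC_mem _ (by linarith) (by linarith)) :=
            mk_AB_AC _ (by linarith) (by linarith) _ _
        _ = mkS (bet (cl ψ)) _ := mkS_congr hb.symm _ _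
    · have e1 : alph (3-3*ψ) = alph 0 := alph_nonpos (by linarith)
      rw [e1, alph_val 0 le_rfl zero_le_one]
      exact mkS_congr (by rw [cl_ge_one ψ (by linarith), bet_one]) _ _

lemma cont_Hh : Continuous fun p : ℝ × ℝ => Hh p.1 p.2 := by
  unfold Hh
  have hcl : Continuous fun p : ℝ × ℝ => cl p.2 := cont_cl.comp continuous_snd
  have hclh : Continuous fun p : ℝ × ℝ => clh p.2 := cont_clh.comp continuous_snd
  apply Continuous.if_le
  · -- upper branch
    apply Continuous.if_le
    · apply cont_alph.comp
      have : Continuous fun p : ℝ × ℝ => min (3*p.1) (2-3*p.1) := by fun_prop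
      fun_prop
    · apply cont_alph.comp; fun_prop
    · fun_prop
    · fun_prop
    · intro x hx
      rw [hx]
      have h1 : (2*cl x.2-1) * min (3*(2/3:ℝ)) (2-3*(2/3)) = 0 := by norm_num
      have h2 : (3:ℝ)-3*(2/3) = 1 := by norm_num
      rw [h1, h2]
      exact alph_01
  · -- lower branch
    apply Continuous.if_le
    · fun_prop
    · apply cont_alph.comp
      apply Continuous.div (by fun_prop) (by fun_prop)
      intro x; exact denom_ne x.2
    · fun_prop
    · fun_prop
    · intro x hx
      have hle : x.1 ≤ 2/3 := by
        have := clh_le_half x.2; rw [hx]; linarith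
      have : (1-x.1)/(1-4*clh x.2/3) = 1 := by
        rw [← hx]; exact div_self (by intro h; rw [hx] at h; exact denom_ne x.2 (by linarith [h]; ))
      rw [this]
      exact alph_01
  · fun_prop
  · fun_prop
  · intro x hx
    rw [← hx]
    have hcl2 : cl (1/2 : ℝ) = 1/2 := cl_of _ (by norm_num) (by norm_num)
    have hclh2 : clh (1/2 : ℝ) = 1/2 := clh_of _ (by norm_num) le_rfl
    rw [hcl2, hclh2]
    have hc : (4*(1/2:ℝ)/3) = 2/3 := by norm_num
    rw [hc]
    split_ifs with h1
    · have e : (2*(1/2:ℝ)-1) * min (3*x.1) (2-3*x.1) = 0 := by norm_num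
      rw [e]
    · apply congrArg alph
      rw [show (1:ℝ)-2/3 = 1/3 by norm_num]
      field_simp

end
end DH
namespace DH
noncomputable section

/-- radial re-gluing map -/
def outF (t σ : ℝ) : DunceHat :=
  if σ ≤ 1/2 then Hh (1-t) (2*σ) else P (2-2*σ) (1-t)

lemma cont_outF : Continuous fun p : ℝ × ℝ => outF p.1 p.2 := by
  unfold outF
  apply Continuous.if_le
  · exact cont_Hh.comp (show Continuous fun p : ℝ × ℝ => ((1:ℝ)-p.1, 2*p.2) by fun_prop)
  · exact cont_P.comp (show Continuous fun p : ℝ × ℝ => ((2:ℝ)-2*p.2, 1-p.1) by fun_prop)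
  · fun_prop
  · fun_prop
  · intro x hx
    rw [hx]
    norm_num
    exact Hh_one _ _ le_rfl

lemma outF_01 (σ : ℝ) : outF 0 σ = outF 1 σ := by
  unfold outF
  split_ifs with h
  · rw [show (1:ℝ)-0 = 1 by norm_num, show (1:ℝ)-1 = 0 by norm_num, Hh_edge1, Hh_edge0]
  · rw [show (1:ℝ)-0 = 1 by norm_num, show (1:ℝ)-1 = 0 by norm_num, P_theta01]

lemma outF_zero (t : ℝ) : outF t 0 = alph t := by
  unfold outF
  rw [if_pos (by norm_num : (0:ℝ) ≤ 1/2), show (2:ℝ)*0 = 0 by norm_num]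
  unfold Hh
  rw [if_neg (by norm_num : ¬((1:ℝ)/2 ≤ 0)), clh_of 0 le_rfl (by norm_num)]
  rcases le_or_gt (1-t) (4*(0:ℝ)/3) with h | h
  · rw [if_pos h]
    exact (alph_ge_one (by norm_num at h ⊢; linarith)).symm
  · rw [if_neg (not_le.2 h)]
    apply congrArg alph
    norm_num

lemma outF_one (t : ℝ) : outF t 1 = P 0 0 := by
  unfold outF
  rw [if_neg (by norm_num : ¬((1:ℝ) ≤ 1/2)), show (2:ℝ)-2*1 = 0 by norm_num, P_zero]

/-- the boundary values of the final stage of the contraction -/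
def B (ψ τ σ : ℝ) : DunceHat :=
  if 1/2 ≤ τ then
    (if ψ ≤ 2/3 then outF ((2*cl τ - 1) * min (3*ψ) (2-3*ψ)) σ else outF (3-3*ψ) σ)
  else
    (if ψ ≤ 4*clh τ/3 then outF 0 σ else outF ((1-ψ)/(1-4*clh τ/3)) σ)

lemma B_zero (ψ τ : ℝ) : B ψ τ 0 = Hh ψ τ := by
  unfold B Hh
  split_ifs <;> rw [outF_zero]

lemma B_one (ψ τ : ℝ) : B ψ τ 1 = P 0 0 := by
  unfold B
  split_ifs <;> rw [outF_one]

lemma B_edge (τ σ : ℝ) : B 0 τ σ = B 1 τ σ := by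
  unfold B
  by_cases h : (1/2:ℝ) ≤ τ
  · rw [if_pos h, if_pos h, if_pos (by norm_num : (0:ℝ) ≤ 2/3),
      if_neg (by norm_num : ¬((1:ℝ) ≤ 2/3))]
    rw [show (2*cl τ - 1) * min (3*(0:ℝ)) (2-3*0) = 0 by norm_num,
      show (3:ℝ)-3*1 = 0 by norm_num]
  · rw [if_neg h, if_neg h,
      if_pos (show (0:ℝ) ≤ 4*clh τ/3 by have := clh_nonneg τ; positivity),
      if_neg (show ¬((1:ℝ) ≤ 4*clh τ/3) by have := clh_le_half τ; intro hc; linarith)]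
    rw [show ((1:ℝ)-1)/(1-4*clh τ/3) = 0 by norm_num]

lemma cont_B : Continuous fun x : ℝ × ℝ × ℝ => B x.1 x.2.1 x.2.2 := by
  unfold B
  apply Continuous.if_le
  · apply Continuous.if_le
    · have hc : Continuous fun x : ℝ × ℝ × ℝ =>
          ((2*cl x.2.1 - 1) * min (3*x.1) (2-3*x.1), x.2.2) := by
        have := cont_cl; fun_prop
      exact cont_outF.comp hc
    · exact cont_outF.comp (show Continuous fun x : ℝ × ℝ × ℝ => ((3:ℝ)-3*x.1, x.2.2) by fun_prop)
    · fun_prop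
    · fun_prop
    · intro x hx
      rw [hx]
      rw [show (2*cl x.2.1-1) * min (3*(2/3:ℝ)) (2-3*(2/3)) = 0 by norm_num,
        show (3:ℝ)-3*(2/3) = 1 by norm_num]
      exact outF_01 _
  · apply Continuous.if_le
    · exact cont_outF.comp
        (show Continuous fun x : ℝ × ℝ × ℝ => ((0:ℝ), x.2.2) by fun_prop)
    · have hc : Continuous fun x : ℝ × ℝ × ℝ =>
          ((1-x.1)/(1-4*clh x.2.1/3), x.2.2) := by
        apply Continuous.prodMk
        · apply Continuous.div (by fun_prop)
          · have := cont_clh; fun_prop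
          · intro x; exact denom_ne x.2.1
        · fun_prop
      exact cont_outF.comp hc
    · fun_prop
    · have := cont_clh; fun_prop
    · intro x hx
      have hle : x.1 ≤ 2/3 := by
        have := clh_le_half x.2.1; rw [hx]; linarith
      have hne : (1:ℝ) - x.1 ≠ 0 := by
        intro h
        have : x.1 = 1 := by linarith
        rw [this] at hle; norm_num at hle
      have : (1-x.1)/(1-4*clh x.2.1/3) = 1 := by
        rw [← hx]; exact div_self hne
      rw [this]
      exact outF_01 x.2.2
  · fun_prop
  · fun_prop
  · intro x hx
    rw [← hx]
    rw [show cl (1/2:ℝ) = 1/2 from cl_of _ (by norm_num) (by norm_num),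
      show clh (1/2:ℝ) = 1/2 from clh_of _ (by norm_num) le_rfl,
      show (4:ℝ)*(1/2)/3 = 2/3 by norm_num]
    split_ifs with h1
    · rw [show (2*(1/2:ℝ)-1) * min (3*x.1) (2-3*x.1) = 0 by norm_num]
    · apply congrArg (fun u => outF u x.2.2)
      rw [show (1:ℝ)-2/3 = 1/3 by norm_num]
      field_simp

end
end DH
namespace DH
noncomputable section

lemma P_eq_of_cl1 {ρ ρ' : ℝ} (h : cl ρ = cl ρ') (θ : ℝ) : P ρ θ = P ρ' θ := by
  unfold P; exact mkS_congr (by rw [h]) _ _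
lemma P_eq_of_cl2 {θ θ' : ℝ} (h : cl θ = cl θ') (ρ : ℝ) : P ρ θ = P ρ θ' := by
  unfold P; exact mkS_congr (by rw [h]) _ _

lemma cl_max0 (x : ℝ) : cl (max 0 x) = cl x := by
  rcases le_total x 0 with h | h
  · rw [max_eq_left h, cl_nonpos x h, cl_of 0 le_rfl zero_le_one]
  · rw [max_eq_right h]

lemma Hh_nonpos {ψ : ℝ} (hψ : ψ ≤ 0) (τ : ℝ) : Hh ψ τ = alph 0 := by
  unfold Hh
  split_ifs with h h1 h2
  · have hm : min (3*ψ) (2-3*ψ) = 3*ψ := min_eq_left (by linarith)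
    rw [hm]
    apply alph_nonpos
    have hc : (1/2:ℝ) ≤ cl τ := (half_le_cl_iff τ).2 h
    nlinarith
  · exact absurd (by linarith : ψ ≤ 2/3) h1
  · rfl
  · refine absurd ?_ h2
    have := clh_nonneg τ
    have : (0:ℝ) ≤ 4*clh τ/3 := by positivity
    linarith

lemma Hh_ge1 {ψ : ℝ} (hψ : 1 ≤ ψ) (τ : ℝ) : Hh ψ τ = alph 0 := by
  unfold Hh
  split_ifs with h h1 h2
  · exact absurd h1 (by intro hc; linarith)
  · exact alph_nonpos (by linarith)
  · have := clh_le_half τ; linarith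
  · have hd := denom_pos τ
    exact alph_nonpos (div_nonpos_iff.mpr (Or.inr ⟨by linarith, hd.le⟩))

lemma P_theta_nonpos {θ : ℝ} (h : θ ≤ 0) (ρ : ℝ) : P ρ θ = P ρ 0 :=
  P_eq_of_cl2 (by rw [cl_nonpos θ h, cl_of 0 le_rfl zero_le_one]) ρ
lemma P_theta_ge1 {θ : ℝ} (h : 1 ≤ θ) (ρ : ℝ) : P ρ θ = P ρ 1 :=
  P_eq_of_cl2 (by rw [cl_ge_one θ h, cl_of 1 zero_le_one le_rfl]) ρ

lemma B_tau0 (ψ σ : ℝ) : B ψ 0 σ = outF (1-ψ) σ := by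
  unfold B
  rw [if_neg (by norm_num : ¬((1:ℝ)/2 ≤ 0)), clh_of 0 le_rfl (by norm_num)]
  by_cases h : ψ ≤ 4*(0:ℝ)/3
  · rw [if_pos h]
    have hψ : ψ ≤ 0 := by norm_num at h; exact h
    unfold outF
    rw [show (1:ℝ)-0 = 1 by norm_num, show (1:ℝ)-(1-ψ) = ψ by ring]
    split_ifs with h2
    · rw [Hh_edge1, Hh_nonpos hψ]
    · rw [P_theta_nonpos hψ, P_theta01]
  · rw [if_neg h]
    apply congrArg (fun u => outF u σ)
    rw [show (1:ℝ)-4*0/3 = 1 by norm_num, div_one]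

lemma outF_eq_S3left (ψ σ : ℝ) :
    (if 2*(1-σ) ≤ 1 then P (2*(1-σ)) ψ else Hh ψ (2-2*(1-σ))) = outF (1-ψ) σ := by
  unfold outF
  rw [show (1:ℝ)-(1-ψ) = ψ by ring]
  rcases lt_trichotomy σ (1/2) with h | h | h
  · rw [if_neg (by intro hc; linarith), if_pos h.le,
      show (2:ℝ)-2*(1-σ) = 2*σ by ring]
  · subst h
    rw [if_pos (by norm_num), if_pos le_rfl,
      show (2:ℝ)*(1-1/2) = 1 by norm_num, show (2:ℝ)*(1/2) = 1 by norm_num,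
      Hh_one _ _ le_rfl]
  · rw [if_pos (by linarith), if_neg (by intro hc; linarith),
      show (2:ℝ)*(1-σ) = 2-2*σ by ring]

/-- stage 1 of the contraction: expand the inner disc -/
def S1 (r θ s : ℝ) : DunceHat :=
  P ((1-3*cl3 s)*cl r + 3*cl3 s*min (4*cl r) 1) θ

/-- stage 2: cancel the back-and-forth part of the attaching word -/
def S2 (r θ s : ℝ) : DunceHat :=
  if r ≤ 1/4 then P (4*r) θ
  else Hh θ (max (max (2-4*r) (2*r-1)) (2-3*clm s))

/-- stage 3: contract the re-glued disc radially -/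
def S3 (r θ s : ℝ) : DunceHat :=
  if r ≤ 1/2 then
    (if 4*clh r*(1-cl (3*s-2)) ≤ 1 then P (4*clh r*(1-cl (3*s-2))) θ
     else Hh θ (2-4*clh r*(1-cl (3*s-2))))
  else B θ (2*cl r - 1) (cl (3*s-2))

/-- the full contraction -/
def Psi (r θ s : ℝ) : DunceHat :=
  if s ≤ 1/3 then S1 r θ s else if s ≤ 2/3 then S2 r θ s else S3 r θ s

lemma cont_S1 : Continuous fun x : ℝ × ℝ × ℝ => S1 x.1 x.2.1 x.2.2 := by
  unfold S1
  exact cont_P.comp (show Continuous fun x : ℝ × ℝ × ℝ =>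
    ((1-3*cl3 x.2.2)*cl x.1 + 3*cl3 x.2.2*min (4*cl x.1) 1, x.2.1) by fun_prop)

lemma cont_S2 : Continuous fun x : ℝ × ℝ × ℝ => S2 x.1 x.2.1 x.2.2 := by
  unfold S2
  apply Continuous.if_le
  · exact cont_P.comp (show Continuous fun x : ℝ × ℝ × ℝ => (4*x.1, x.2.1) by fun_prop)
  · exact cont_Hh.comp (show Continuous fun x : ℝ × ℝ × ℝ =>
      (x.2.1, max (max (2-4*x.1) (2*x.1-1)) (2-3*clm x.2.2)) by fun_prop)
  · fun_prop
  · fun_prop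
  · intro x hx
    rw [hx]
    have h1 : (1:ℝ) ≤ max (max (2-4*(1/4)) (2*(1/4)-1)) (2-3*clm x.2.2) := by
      apply le_trans _ (le_max_left _ _)
      apply le_trans _ (le_max_left _ _)
      norm_num
    rw [Hh_one _ _ h1]
    exact P_eq_of_cl1 (by norm_num) _
  
lemma cont_S3 : Continuous fun x : ℝ × ℝ × ℝ => S3 x.1 x.2.1 x.2.2 := by
  unfold S3
  apply Continuous.if_le
  · apply Continuous.if_le
    · exact cont_P.comp (show Continuous fun x : ℝ × ℝ × ℝ =>
        (4*clh x.1*(1-cl (3*x.2.2-2)), x.2.1) by fun_prop)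
    · exact cont_Hh.comp (show Continuous fun x : ℝ × ℝ × ℝ =>
        (x.2.1, 2-4*clh x.1*(1-cl (3*x.2.2-2))) by fun_prop)
    · fun_prop
    · fun_prop
    · intro x hx
      rw [hx, show (2:ℝ)-1 = 1 by norm_num, Hh_one _ _ le_rfl]
  · exact cont_B.comp (show Continuous fun x : ℝ × ℝ × ℝ =>
      (x.2.1, 2*cl x.1 - 1, cl (3*x.2.2-2)) by fun_prop)
  · fun_prop
  · fun_prop
  · intro x hx
    rw [hx]
    rw [show clh (1/2:ℝ) = 1/2 from clh_of _ (by norm_num) le_rfl,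
      show cl (1/2:ℝ) = 1/2 from cl_of _ (by norm_num) (by norm_num),
      show (4:ℝ)*(1/2) = 2 by norm_num, show (2:ℝ)*(1/2)-1 = 0 by norm_num]
    rw [B_tau0]
    exact outF_eq_S3left _ _

lemma seam13 (r θ : ℝ) : S1 r θ (1/3) = S2 r θ (1/3) := by
  unfold S1 S2
  rw [show cl3 (1/3:ℝ) = 1/3 from cl3_of _ (by norm_num) le_rfl,
    show clm (1/3:ℝ) = 1/3 from clm_of _ le_rfl (by norm_num),
    show (1:ℝ)-3*(1/3) = 0 by norm_num, show (2:ℝ)-3*(1/3) = 1 by norm_num,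
    show (3:ℝ)*(1/3) = 1 by norm_num]
  by_cases h : r ≤ 1/4
  · rw [if_pos h]
    apply P_eq_of_cl1 _ θ
    have h1 : cl r = max 0 r := by
      unfold cl; rw [min_eq_right (by linarith)]
    rw [h1]
    have h2 : min (4*max 0 r) 1 = 4 * max 0 r := by
      apply min_eq_left
      rcases le_total r 0 with h3 | h3
      · rw [max_eq_left h3]; norm_num
      · rw [max_eq_right h3]; linarith
    rw [h2, show (0:ℝ)*max 0 r + 1*(4*max 0 r) = max 0 (4*r) by
      rcases le_total r 0 with h3 | h3
      · rw [max_eq_left h3, max_eq_left (by linarith)]; ring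
      · rw [max_eq_right h3, max_eq_right (by linarith)]; ring]
    exact cl_max0 (4*r)
  · rw [if_neg h]
    have h1 : (1:ℝ) ≤ max (max (2-4*r) (2*r-1)) 1 := le_max_right _ _
    rw [Hh_one _ _ h1]
    apply P_eq_of_cl1 _ θ
    have h2 : min (4*cl r) 1 = 1 := by
      apply min_eq_right
      have : (1/4:ℝ) ≤ cl r := by
        apply le_max_of_le_right
        apply le_min (by norm_num) (by linarith)
      linarith
    rw [h2]
    norm_num

lemma seam23 (r θ : ℝ) : S2 r θ (2/3) = S3 r θ (2/3) := by
  unfold S2 S3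
  rw [show clm (2/3:ℝ) = 2/3 from clm_of _ (by norm_num) le_rfl,
    show (2:ℝ)-3*(2/3) = 0 by norm_num,
    show (3:ℝ)*(2/3)-2 = 0 by norm_num,
    show cl (0:ℝ) = 0 from cl_of _ le_rfl zero_le_one,
    show (1:ℝ)-0 = 1 by norm_num]
  by_cases h : r ≤ 1/4
  · rw [if_pos h, if_pos (by linarith : r ≤ 1/2)]
    have hch : clh r = max 0 r := by
      unfold clh; rw [min_eq_right (by linarith)]
    have hle : 4*clh r*1 ≤ 1 := by
      rw [hch]
      rcases le_total r 0 with h3 | h3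
      · rw [max_eq_left h3]; norm_num
      · rw [max_eq_right h3]; linarith
    rw [if_pos hle]
    apply P_eq_of_cl1 _ θ
    rw [hch, show (4:ℝ)*max 0 r*1 = max 0 (4*r) by
      rcases le_total r 0 with h3 | h3
      · rw [max_eq_left h3, max_eq_left (by linarith)]; ring
      · rw [max_eq_right h3, max_eq_right (by linarith)]; ring]
    exact (cl_max0 (4*r)).symm
  · rw [if_neg h]
    by_cases h2 : r ≤ 1/2
    · rw [if_pos h2]
      have hch : clh r = r := clh_of r (by linarith) h2
      have hgt : ¬(4*clh r*1 ≤ 1) := by rw [hch]; intro hc; linarith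
      rw [if_neg hgt, hch, mul_one]
      apply congrArg (Hh θ)
      have e1 : max (2-4*r) (2*r-1) = 2-4*r := max_eq_left (by linarith)
      rw [e1]
      exact max_eq_left (by linarith)
    · rw [if_neg h2, B_zero]
      have e1 : max (max (2-4*r) (2*r-1)) 0 = 2*r-1 := by
        rw [max_eq_right (by linarith : 2-4*r ≤ 2*r-1), max_eq_left (by linarith)]
      rw [e1]
      have e2 : (2*cl r - 1) = cl (2*r-1) := by
        rcases le_total r 1 with h3 | h3
        · rw [cl_of r (by linarith) h3, cl_of (2*r-1) (by linarith) (by linarith)]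
        · rw [cl_ge_one r h3, cl_ge_one (2*r-1) (by linarith)]; norm_num
      rw [e2, Hh_cl]

lemma cont_Psi : Continuous fun x : ℝ × ℝ × ℝ => Psi x.1 x.2.1 x.2.2 := by
  unfold Psi
  apply Continuous.if_le
  · exact cont_S1
  · apply Continuous.if_le cont_S2 cont_S3 (by fun_prop) (by fun_prop)
    intro x hx
    rw [hx]
    exact seam23 x.1 x.2.1
  · fun_prop
  · fun_prop
  · intro x hx
    rw [hx, if_pos (by norm_num : (1/3:ℝ) ≤ 2/3)]
    exact seam13 x.1 x.2.1

end
end DH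
namespace DH
noncomputable section

lemma S1_one (θ s : ℝ) : S1 1 θ s = P 1 θ := by
  unfold S1
  rw [show cl (1:ℝ) = 1 from cl_of _ zero_le_one le_rfl,
    show min ((4:ℝ)*1) 1 = 1 from min_eq_right (by norm_num)]
  exact P_eq_of_cl1 (by apply congrArg cl; ring) θ

lemma S2_one (θ s : ℝ) : S2 1 θ s = P 1 θ := by
  unfold S2
  rw [if_neg (by norm_num : ¬((1:ℝ) ≤ 1/4))]
  apply Hh_one
  calc (1:ℝ) = 2*1-1 := by norm_num
    _ ≤ max (2-4*1) (2*1-1) := le_max_right _ _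
    _ ≤ _ := le_max_left _ _

lemma S3_one (θ s : ℝ) : S3 1 θ s = B θ 1 (cl (3*s-2)) := by
  unfold S3
  rw [if_neg (by norm_num : ¬((1:ℝ) ≤ 1/2)),
    show (2:ℝ)*cl 1 - 1 = 1 by rw [cl_of 1 zero_le_one le_rfl]; norm_num]

lemma B1a (t σ : ℝ) (h0 : 0 ≤ t) (h1 : t ≤ 1) : B (t/3) 1 σ = outF t σ := by
  unfold B
  rw [if_pos (by norm_num : (1:ℝ)/2 ≤ 1), cl_of 1 zero_le_one le_rfl,
    if_pos (by linarith : t/3 ≤ 2/3)]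
  apply congrArg (fun u => outF u σ)
  rw [show (3:ℝ)*(t/3) = t by ring, min_eq_left (by linarith : t ≤ 2-t)]
  norm_num

lemma B1b (t σ : ℝ) (h0 : 0 ≤ t) (h1 : t ≤ 1) : B ((2-t)/3) 1 σ = outF t σ := by
  unfold B
  rw [if_pos (by norm_num : (1:ℝ)/2 ≤ 1), cl_of 1 zero_le_one le_rfl,
    if_pos (by linarith : (2-t)/3 ≤ 2/3)]
  apply congrArg (fun u => outF u σ)
  rw [show (3:ℝ)*((2-t)/3) = 2-t by ring, show (2:ℝ)-(2-t) = t by ring,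
    min_eq_right (by linarith : t ≤ 2-t)]
  norm_num

lemma B1c (t σ : ℝ) (h0 : 0 ≤ t) (h1 : t ≤ 1) : B (1-t/3) 1 σ = outF t σ := by
  unfold B
  rw [if_pos (by norm_num : (1:ℝ)/2 ≤ 1), cl_of 1 zero_le_one le_rfl]
  rcases eq_or_lt_of_le h1 with he | hl
  · subst he
    rw [if_pos (by norm_num : (1:ℝ)-1/3 ≤ 2/3),
      show (2*(1:ℝ)-1) * min (3*(1-1/3)) (2-3*(1-1/3)) = 0 by norm_num]
    exact outF_01 σ
  · rw [if_neg (by intro hc; linarith : ¬(1-t/3 ≤ 2/3))]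
    apply congrArg (fun u => outF u σ)
    ring

-- boundary values of P 1
lemma P1a (t : ℝ) (h0 : 0 ≤ t) (h1 : t ≤ 1) :
    P 1 (t/3) = mkS (eAB t) (eAB_mem t h0 h1) := by
  rw [P_one]
  apply mkS_congr
  rw [cl_of (t/3) (by linarith) (by linarith)]
  unfold bet
  rw [if_pos (by linarith : t/3 ≤ 1/3)]
  apply congrArg eAB; ring

lemma P1b (t : ℝ) (h0 : 0 ≤ t) (h1 : t ≤ 1) :
    P 1 ((2-t)/3) = mkS (eCB t) (eCB_mem t h0 h1) := by
  rw [P_one]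
  apply mkS_congr
  rw [cl_of ((2-t)/3) (by linarith) (by linarith)]
  unfold bet
  rcases eq_or_lt_of_le h1 with he | hl
  · subst he
    rw [if_pos (by norm_num : (2-(1:ℝ))/3 ≤ 1/3)]
    funext i; fin_cases i <;> simp [eAB, eCB] <;> norm_num
  · rw [if_neg (by intro hc; linarith : ¬((2-t)/3 ≤ 1/3)),
      if_pos (by linarith : (2-t)/3 ≤ 2/3)]
    apply congrArg eCB; ring

lemma P1c (t : ℝ) (h0 : 0 ≤ t) (h1 : t ≤ 1) :
    P 1 (1-t/3) = mkS (eAC t) (eAC_mem t h0 h1) := by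
  rw [P_one]
  apply mkS_congr
  rw [cl_of (1-t/3) (by linarith) (by linarith)]
  unfold bet
  rcases eq_or_lt_of_le h1 with he | hl
  · subst he
    rw [if_neg (by norm_num : ¬((1:ℝ)-1/3 ≤ 1/3)), if_pos (by norm_num : (1:ℝ)-1/3 ≤ 2/3)]
    funext i; fin_cases i <;> simp [eAC, eCB] <;> norm_num
  · rw [if_neg (by intro hc; linarith : ¬(1-t/3 ≤ 1/3)),
      if_neg (by intro hc; linarith : ¬(1-t/3 ≤ 2/3))]
    apply congrArg eAC; ring

lemma P1_CB_AB (t : ℝ) (h0 : 0 ≤ t) (h1 : t ≤ 1) : P 1 ((2-t)/3) = P 1 (t/3) := by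
  rw [P1a t h0 h1, P1b t h0 h1]
  exact (mk_AB_CB t h0 h1 _ _).symm

lemma P1_AC_AB (t : ℝ) (h0 : 0 ≤ t) (h1 : t ≤ 1) : P 1 (1-t/3) = P 1 (t/3) := by
  rw [P1a t h0 h1, P1c t h0 h1]
  exact (mk_AB_AC t h0 h1 _ _).symm

lemma Psi_bdry_b (t s : ℝ) (h0 : 0 ≤ t) (h1 : t ≤ 1) :
    Psi 1 ((2-t)/3) s = Psi 1 (t/3) s := by
  unfold Psi
  split_ifs with hs1 hs2
  · rw [S1_one, S1_one]; exact P1_CB_AB t h0 h1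
  · rw [S2_one, S2_one]; exact P1_CB_AB t h0 h1
  · rw [S3_one, S3_one, B1a t _ h0 h1, B1b t _ h0 h1]

lemma Psi_bdry_c (t s : ℝ) (h0 : 0 ≤ t) (h1 : t ≤ 1) :
    Psi 1 (1-t/3) s = Psi 1 (t/3) s := by
  unfold Psi
  split_ifs with hs1 hs2
  · rw [S1_one, S1_one]; exact P1_AC_AB t h0 h1
  · rw [S2_one, S2_one]; exact P1_AC_AB t h0 h1
  · rw [S3_one, S3_one, B1a t _ h0 h1, B1c t _ h0 h1]

lemma Psi_s0 (r θ : ℝ) : Psi r θ 0 = P r θ := by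
  unfold Psi
  rw [if_pos (by norm_num : (0:ℝ) ≤ 1/3)]
  unfold S1
  rw [show cl3 (0:ℝ) = 0 from cl3_of _ le_rfl (by norm_num)]
  exact P_eq_of_cl1 (by rw [show (1-3*(0:ℝ))*cl r + 3*0*min (4*cl r) 1 = cl r by ring, cl_cl]) θ

lemma Psi_s1 (r θ : ℝ) : Psi r θ 1 = P 0 0 := by
  unfold Psi
  rw [if_neg (by norm_num : ¬((1:ℝ) ≤ 1/3)), if_neg (by norm_num : ¬((1:ℝ) ≤ 2/3))]
  unfold S3
  rw [show (3:ℝ)*1-2 = 1 by norm_num, cl_of 1 zero_le_one le_rfl]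
  by_cases h : r ≤ 1/2
  · rw [if_pos h, if_pos (by rw [show (1:ℝ)-1 = 0 by norm_num]; norm_num)]
    rw [show 4*clh r*((1:ℝ)-1) = 0 by ring]
    exact P_zero θ
  · rw [if_neg h, B_one]

lemma Psi_edge (r s : ℝ) : Psi r 0 s = Psi r 1 s := by
  unfold Psi
  split_ifs with hs1 hs2
  · exact P_theta01 _
  · unfold S2
    split_ifs with h
    · exact P_theta01 _
    · rw [Hh_edge0, Hh_edge1]
  · unfold S3
    split_ifs with h h2
    · exact P_theta01 _
    · rw [Hh_edge0, Hh_edge1]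
    · exact B_edge _ _

lemma Psi_center (θ s : ℝ) : Psi 0 θ s = Psi 0 0 s := by
  unfold Psi
  split_ifs with hs1 hs2
  · unfold S1
    rw [show cl (0:ℝ) = 0 from cl_of _ le_rfl zero_le_one]
    rw [show (1-3*cl3 s)*(0:ℝ) + 3*cl3 s*min (4*0) 1 = 0 by norm_num]
    exact P_zero θ
  · unfold S2
    rw [if_pos (by norm_num : (0:ℝ) ≤ 1/4), if_pos (by norm_num : (0:ℝ) ≤ 1/4),
      show (4:ℝ)*0 = 0 by norm_num]
    exact P_zero θ
  · unfold S3
    rw [if_pos (by norm_num : (0:ℝ) ≤ 1/2), if_pos (by norm_num : (0:ℝ) ≤ 1/2),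
      show clh (0:ℝ) = 0 from clh_of _ le_rfl (by norm_num)]
    rw [show (4:ℝ)*0*(1-cl (3*s-2)) = 0 by ring]
    rw [if_pos (by norm_num : (0:ℝ) ≤ 1), if_pos (by norm_num : (0:ℝ) ≤ 1)]
    exact P_zero θ

end
end DH
namespace DH
noncomputable section

lemma bet_zero_coord (θ : ℝ) : ∃ i, bet θ i = 0 := by
  unfold bet
  split_ifs
  · exact ⟨2, by simp [eAB]⟩
  · exact ⟨0, by simp [eCB]⟩
  · exact ⟨1, by simp [eAC]⟩

lemma bet_inj {θ θ' : ℝ} (h0 : 0 ≤ θ) (h1 : θ ≤ 1) (h0' : 0 ≤ θ') (h1' : θ' ≤ 1)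
    (h : bet θ = bet θ') :
    θ = θ' ∨ (θ = 0 ∧ θ' = 1) ∨ (θ = 1 ∧ θ' = 0) := by
  have e0 := congrFun h 0
  have e1 := congrFun h 1
  have e2 := congrFun h 2
  unfold bet at e0 e1 e2
  split_ifs at e0 e1 e2 <;>
    simp [eAB, eAC, eCB] at e0 e1 e2 <;>
    first
      | (left; linarith)
      | (exfalso; linarith)
      | (right; left; exact ⟨by linarith, by linarith⟩)
      | (right; right; exact ⟨by linarith, by linarith⟩)

lemma Phi_r_eq {r θ r' θ' : ℝ} (hr0 : 0 ≤ r) (hθ0 : 0 ≤ θ) (hθ1 : θ ≤ 1)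
    (hr0' : 0 ≤ r') (hθ0' : 0 ≤ θ') (hθ1' : θ' ≤ 1)
    (h : Phi r θ = Phi r' θ') : r = r' := by
  obtain ⟨i, hi⟩ := bet_zero_coord θ
  obtain ⟨i', hi'⟩ := bet_zero_coord θ'
  have k1 := congrFun h i
  have k2 := congrFun h i'
  unfold Phi at k1 k2
  rw [hi] at k1
  rw [hi'] at k2
  have hb := (bet_mem θ' hθ0' hθ1').1 i
  have hb' := (bet_mem θ hθ0 hθ1).1 i'
  nlinarith [mul_nonneg hr0' hb, mul_nonneg hr0 hb']

lemma Phi_fiber {r θ r' θ' : ℝ} (hr0 : 0 ≤ r) (hr1 : r ≤ 1) (hθ0 : 0 ≤ θ) (hθ1 : θ ≤ 1)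
    (hr0' : 0 ≤ r') (hr1' : r' ≤ 1) (hθ0' : 0 ≤ θ') (hθ1' : θ' ≤ 1)
    (h : Phi r θ = Phi r' θ') :
    r = r' ∧ (r = 0 ∨ θ = θ' ∨ (θ = 0 ∧ θ' = 1) ∨ (θ = 1 ∧ θ' = 0)) := by
  have hrr := Phi_r_eq hr0 hθ0 hθ1 hr0' hθ0' hθ1' h
  refine ⟨hrr, ?_⟩
  rcases eq_or_lt_of_le hr0 with h0 | h0
  · exact Or.inl h0.symm
  · right
    subst hrr
    have hb : bet θ = bet θ' := by
      funext j
      have hj := congrFun h j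
      unfold Phi at hj
      have h2 : r * bet θ j = r * bet θ' j := by linarith
      exact mul_left_cancel₀ (ne_of_gt h0) h2
    exact bet_inj hθ0 hθ1 hθ0' hθ1' hb

lemma Phi_eq_center (x : Fin 3 → ℝ) (h0 : x 0 = 1/3) (h1 : x 1 = 1/3) (h2 : x 2 = 1/3) :
    Phi 0 0 = x := by
  funext i
  unfold Phi bet
  rw [if_pos (by norm_num : (0:ℝ) ≤ 1/3)]
  fin_cases i <;> simp [eAB] <;> linarith

lemma Phi_surj (x : Fin 3 → ℝ) (hx : x ∈ Simplex2) :
    ∃ r θ : ℝ, 0 ≤ r ∧ r ≤ 1 ∧ 0 ≤ θ ∧ θ ≤ 1 ∧ Phi r θ = x := by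
  obtain ⟨hpos, hsum⟩ := hx
  rw [Fin.sum_univ_three] at hsum
  have hp0 := hpos 0
  have hp1 := hpos 1
  have hp2 := hpos 2
  by_cases hA : x 2 ≤ x 0 ∧ x 2 ≤ x 1
  · obtain ⟨ha, hb⟩ := hA
    have hr0 : (0:ℝ) ≤ 1 - 3 * x 2 := by linarith
    rcases eq_or_lt_of_le hr0 with hz | hz
    · exact ⟨0, 0, le_rfl, zero_le_one, le_rfl, zero_le_one,
        Phi_eq_center x (by linarith) (by linarith) (by linarith)⟩
    · set r : ℝ := 1 - 3 * x 2 with hrdef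
      set θv : ℝ := (x 1 - x 2)/(3*r) with hθdef
      have hθ0 : 0 ≤ θv := div_nonneg (by linarith) (by linarith)
      have hθ13 : θv ≤ 1/3 := by
        rw [hθdef, div_le_iff₀ (by linarith : (0:ℝ) < 3*r)]
        rw [hrdef]; linarith
      have key : r * (3 * θv) = x 1 - x 2 := by
        rw [hθdef]; field_simp
      refine ⟨r, θv, by linarith, by rw [hrdef]; linarith, hθ0, by linarith, ?_⟩
      funext i
      unfold Phi bet
      rw [if_pos hθ13]
      fin_cases i <;> simp [eAB] <;> nlinarith [key]
  · by_cases hB : x 0 ≤ x 1 ∧ x 0 ≤ x 2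
    · obtain ⟨ha, hb⟩ := hB
      have hr0 : (0:ℝ) ≤ 1 - 3 * x 0 := by linarith
      rcases eq_or_lt_of_le hr0 with hz | hz
      · exact ⟨0, 0, le_rfl, zero_le_one, le_rfl, zero_le_one,
          Phi_eq_center x (by linarith) (by linarith) (by linarith)⟩
      · set r : ℝ := 1 - 3 * x 0 with hrdef
        set θv : ℝ := (2 - (x 1 - x 0)/r)/3 with hθdef
        have hq0 : 0 ≤ (x 1 - x 0)/r := div_nonneg (by linarith) (by linarith)
        have hq1 : (x 1 - x 0)/r ≤ 1 := by
          rw [div_le_one (by linarith : (0:ℝ) < r)]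
          rw [hrdef]; linarith
        have hθlo : 1/3 ≤ θv := by rw [hθdef]; linarith
        have hθhi : θv ≤ 2/3 := by rw [hθdef]; linarith
        have key : r * (2 - 3 * θv) = x 1 - x 0 := by
          rw [hθdef]; field_simp; ring
        refine ⟨r, θv, by linarith, by rw [hrdef]; linarith, by linarith, by linarith, ?_⟩
        funext i
        unfold Phi bet
        rcases eq_or_lt_of_le hθlo with heq | hlt
        · rw [if_pos (le_of_eq heq.symm)]
          fin_cases i <;> simp [eAB] <;> nlinarith [key, heq]
        · rw [if_neg (by intro hc; linarith : ¬(θv ≤ 1/3)), if_pos hθhi]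
          fin_cases i <;> simp [eCB] <;> nlinarith [key]
    · push_neg at hA hB
      have ha : x 1 ≤ x 0 := by
        by_contra hcon
        push_neg at hcon
        have h1 := hB (by linarith)
        have h2 := hA (by linarith)
        linarith
      have hb : x 1 ≤ x 2 := by
        by_contra hcon
        push_neg at hcon
        rcases le_or_gt (x 2) (x 0) with h | h
        · have := hA h; linarith
        · have := hB (by linarith)
          linarith
      have hr0 : (0:ℝ) ≤ 1 - 3 * x 1 := by linarith
      rcases eq_or_lt_of_le hr0 with hz | hz
      · exact ⟨0, 0, le_rfl, zero_le_one, le_rfl, zero_le_one,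
          Phi_eq_center x (by linarith) (by linarith) (by linarith)⟩
      · set r : ℝ := 1 - 3 * x 1 with hrdef
        set θv : ℝ := (2 + (x 0 - x 1)/r)/3 with hθdef
        have hq0 : 0 ≤ (x 0 - x 1)/r := div_nonneg (by linarith) (by linarith)
        have hq1 : (x 0 - x 1)/r ≤ 1 := by
          rw [div_le_one (by linarith : (0:ℝ) < r)]
          rw [hrdef]; linarith
        have hθlo : 2/3 ≤ θv := by rw [hθdef]; linarith
        have hθhi : θv ≤ 1 := by rw [hθdef]; linarith
        have key : r * (3 * θv - 2) = x 0 - x 1 := by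
          rw [hθdef]; field_simp; ring
        refine ⟨r, θv, by linarith, by rw [hrdef]; linarith, by linarith, hθhi, ?_⟩
        funext i
        unfold Phi bet
        rcases eq_or_lt_of_le hθlo with heq | hlt
        · rw [if_neg (by intro hc; linarith : ¬(θv ≤ 1/3)), if_pos (le_of_eq heq.symm)]
          fin_cases i <;> simp [eCB] <;> nlinarith [key, heq]
        · rw [if_neg (by intro hc; linarith : ¬(θv ≤ 1/3)),
            if_neg (by intro hc; linarith : ¬(θv ≤ 2/3))]
          fin_cases i <;> simp [eAC] <;> nlinarith [key]

lemma Psi_fiber {r θ r' θ' : ℝ} (hr0 : 0 ≤ r) (hr1 : r ≤ 1) (hθ0 : 0 ≤ θ) (hθ1 : θ ≤ 1)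
    (hr0' : 0 ≤ r') (hr1' : r' ≤ 1) (hθ0' : 0 ≤ θ') (hθ1' : θ' ≤ 1)
    (h : Phi r θ = Phi r' θ') (s : ℝ) :
    Psi r θ s = Psi r' θ' s := by
  obtain ⟨hrr, hcase⟩ := Phi_fiber hr0 hr1 hθ0 hθ1 hr0' hr1' hθ0' hθ1' h
  subst hrr
  rcases hcase with h0 | h0 | ⟨ha, hb⟩ | ⟨ha, hb⟩
  · subst h0
    exact (Psi_center θ s).trans (Psi_center θ' s).symm
  · rw [h0]
  · subst ha; subst hb
    exact Psi_edge r s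
  · subst ha; subst hb
    exact (Psi_edge r s).symm

end
end DH
namespace DH
noncomputable section

open unitInterval Topology Function

lemma cont_Phi : Continuous fun q : ℝ × ℝ => Phi q.1 q.2 := by
  unfold Phi
  apply continuous_pi
  intro i
  have : Continuous fun q : ℝ × ℝ => bet q.2 i :=
    (continuous_apply i).comp (cont_bet.comp continuous_snd)
  fun_prop

/-- the square parametrizes the triangle -/
def PhiS : (I × I) → Simplex2 := fun p =>
  ⟨Phi p.1 p.2, Phi_mem _ _ p.1.2.1 p.1.2.2 p.2.2.1 p.2.2.2⟩

lemma cont_PhiS : Continuous PhiS := by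
  apply Continuous.subtype_mk
  exact cont_Phi.comp ((continuous_subtype_val.comp continuous_fst).prodMk
    (continuous_subtype_val.comp continuous_snd))

lemma surj_PhiS : Surjective PhiS := by
  intro x
  obtain ⟨r, θ, hr0, hr1, hθ0, hθ1, he⟩ := Phi_surj x.1 x.2
  exact ⟨(⟨r, hr0, hr1⟩, ⟨θ, hθ0, hθ1⟩), Subtype.ext he⟩

/-- a (noncontinuous) section of `PhiS` -/
def sec (x : Simplex2) : I × I := (surj_PhiS x).choose

lemma sec_spec (x : Simplex2) : PhiS (sec x) = x := (surj_PhiS x).choose_spec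

lemma sec_spec' (x : Simplex2) : Phi ((sec x).1 : ℝ) ((sec x).2 : ℝ) = x.1 :=
  congrArg Subtype.val (sec_spec x)

/-- the contraction, on triangle × time data -/
def K2 : Simplex2 × I → DunceHat := fun q =>
  Psi ((sec q.1).1 : ℝ) ((sec q.1).2 : ℝ) (q.2 : ℝ)

lemma K2_eq (r θ s : I) : K2 (PhiS (r, θ), s) = Psi (r:ℝ) (θ:ℝ) (s:ℝ) := by
  unfold K2
  set x := PhiS (r, θ) with hx
  exact Psi_fiber (sec x).1.2.1 (sec x).1.2.2 (sec x).2.2.1 (sec x).2.2.2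
    r.2.1 r.2.2 θ.2.1 θ.2.2 (sec_spec' x) _

lemma cont_K2 : Continuous K2 := by
  have hq2 : IsQuotientMap (fun p : (I × I) × I => (PhiS p.1, p.2)) := by
    apply IsClosedMap.isQuotientMap
    · exact Continuous.isClosedMap (by exact (cont_PhiS.comp continuous_fst).prodMk continuous_snd)
    · exact (cont_PhiS.comp continuous_fst).prodMk continuous_snd
    · intro q
      obtain ⟨q1, q2⟩ := q
      obtain ⟨p, hp⟩ := surj_PhiS q1
      exact ⟨(p, q2), by show (PhiS p, q2) = (q1, q2); rw [hp]⟩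
  rw [hq2.continuous_iff]
  have he : (K2 ∘ fun p : (I × I) × I => (PhiS p.1, p.2)) =
      fun p => Psi (p.1.1 : ℝ) (p.1.2 : ℝ) (p.2 : ℝ) := by
    funext p
    exact K2_eq p.1.1 p.1.2 p.2
  rw [he]
  have hco : Continuous fun p : (I × I) × I => ((p.1.1 : ℝ), ((p.1.2 : ℝ), (p.2 : ℝ))) :=
    (continuous_subtype_val.comp (continuous_fst.comp continuous_fst)).prodMk
      ((continuous_subtype_val.comp (continuous_snd.comp continuous_fst)).prodMk
        (continuous_subtype_val.comp continuous_snd))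
  exact cont_Psi.comp hco

lemma Phi_AB (t : ℝ) (h0 : 0 ≤ t) (h1 : t ≤ 1) : Phi 1 (t/3) = eAB t := by
  rw [Phi_one]
  unfold bet
  rw [if_pos (by linarith : t/3 ≤ 1/3)]
  exact congrArg eAB (by ring)

lemma Phi_CB (t : ℝ) (h0 : 0 ≤ t) (h1 : t ≤ 1) : Phi 1 ((2-t)/3) = eCB t := by
  rw [Phi_one]
  unfold bet
  rcases eq_or_lt_of_le h1 with he | hl
  · subst he
    rw [if_pos (by norm_num : (2-(1:ℝ))/3 ≤ 1/3)]
    funext i; fin_cases i <;> simp [eAB, eCB] <;> norm_num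
  · rw [if_neg (by intro hc; linarith : ¬((2-t)/3 ≤ 1/3)),
      if_pos (by linarith : (2-t)/3 ≤ 2/3)]
    exact congrArg eCB (by ring)

lemma Phi_AC (t : ℝ) (h0 : 0 ≤ t) (h1 : t ≤ 1) : Phi 1 (1-t/3) = eAC t := by
  rw [Phi_one]
  unfold bet
  rcases eq_or_lt_of_le h1 with he | hl
  · subst he
    rw [if_neg (by norm_num : ¬((1:ℝ)-1/3 ≤ 1/3)), if_pos (by norm_num : (1:ℝ)-1/3 ≤ 2/3)]
    funext i; fin_cases i <;> simp [eAC, eCB] <;> norm_num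
  · rw [if_neg (by intro hc; linarith : ¬(1-t/3 ≤ 1/3)),
      if_neg (by intro hc; linarith : ¬(1-t/3 ≤ 2/3))]
    exact congrArg eAC (by ring)

/-- the value of `K2` at a point whose image in the triangle is known -/
lemma K2_val (p : Simplex2) (r θ : ℝ) (hr0 : 0 ≤ r) (hr1 : r ≤ 1) (hθ0 : 0 ≤ θ)
    (hθ1 : θ ≤ 1) (hp : p.1 = Phi r θ) (s : I) : K2 (p, s) = Psi r θ (s : ℝ) := by
  unfold K2
  exact Psi_fiber (sec p).1.2.1 (sec p).1.2.2 (sec p).2.2.1 (sec p).2.2.2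
    hr0 hr1 hθ0 hθ1 (by rw [sec_spec' p, hp]) _

lemma K2_compat (s : I) (p p' : Simplex2) (h : dunceRel p p') : K2 (p, s) = K2 (p', s) := by
  obtain ⟨t, ht0, ht1, hcase⟩ := h
  rcases hcase with ⟨hp, hp'⟩ | ⟨hp, hp'⟩ | ⟨hp, hp'⟩
  · rw [K2_val p 1 (t/3) zero_le_one le_rfl (by linarith) (by linarith)
      (by rw [hp, Phi_AB t ht0 ht1]) s]
    rw [K2_val p' 1 (1-t/3) zero_le_one le_rfl (by linarith) (by linarith)
      (by rw [hp', Phi_AC t ht0 ht1]) s]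
    exact (Psi_bdry_c t _ ht0 ht1).symm
  · rw [K2_val p 1 (t/3) zero_le_one le_rfl (by linarith) (by linarith)
      (by rw [hp, Phi_AB t ht0 ht1]) s]
    rw [K2_val p' 1 ((2-t)/3) zero_le_one le_rfl (by linarith) (by linarith)
      (by rw [hp', Phi_CB t ht0 ht1]) s]
    exact (Psi_bdry_b t _ ht0 ht1).symm
  · rw [K2_val p 1 (1-t/3) zero_le_one le_rfl (by linarith) (by linarith)
      (by rw [hp, Phi_AC t ht0 ht1]) s]
    rw [K2_val p' 1 ((2-t)/3) zero_le_one le_rfl (by linarith) (by linarith)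
      (by rw [hp', Phi_CB t ht0 ht1]) s]
    exact (Psi_bdry_c t _ ht0 ht1).trans (Psi_bdry_b t _ ht0 ht1).symm

/-- the contraction of the dunce hat -/
def Khom : DunceHat × I → DunceHat := fun z =>
  Quot.liftOn z.1 (fun p => K2 (p, z.2)) (fun p p' h => K2_compat z.2 p p' h)

lemma cont_Khom : Continuous Khom := by
  apply (isQuotientMap_quot_mk (r := dunceRel)).continuous_lift_prod_left
  exact cont_K2

lemma Khom_zero (x : DunceHat) : Khom (x, 0) = x := by
  induction x using Quot.ind with
  | _ p =>
    show K2 (p, 0) = Quot.mk _ p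
    rw [K2_val p ((sec p).1 : ℝ) ((sec p).2 : ℝ) (sec p).1.2.1 (sec p).1.2.2
      (sec p).2.2.1 (sec p).2.2.2 (sec_spec' p).symm 0]
    rw [show ((0 : I) : ℝ) = 0 from rfl, Psi_s0]
    unfold P mkS
    apply congrArg (Quot.mk dunceRel)
    apply Subtype.ext
    show Phi (cl _) (cl _) = p.1
    rw [cl_of _ (sec p).1.2.1 (sec p).1.2.2, cl_of _ (sec p).2.2.1 (sec p).2.2.2]
    exact sec_spec' p

lemma Khom_one (x : DunceHat) : Khom (x, 1) = P 0 0 := by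
  induction x using Quot.ind with
  | _ p =>
    show K2 (p, 1) = P 0 0
    rw [K2_val p ((sec p).1 : ℝ) ((sec p).2 : ℝ) (sec p).1.2.1 (sec p).1.2.2
      (sec p).2.2.1 (sec p).2.2.2 (sec_spec' p).symm 1]
    rw [show ((1 : I) : ℝ) = 1 from rfl, Psi_s1]

end
end DH

/-- the dunce hat is contractible. -/
theorem stmt9 : ContractibleSpace DunceHat := by
  rw [contractible_iff_id_nullhomotopic]
  refine ⟨DH.P 0 0, ⟨?_⟩⟩
  exact {
    toFun := fun z => DH.Khom (z.2, z.1)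
    continuous_toFun := DH.cont_Khom.comp (continuous_snd.prodMk continuous_fst)
    map_zero_left := DH.Khom_zero
    map_one_left := DH.Khom_one }
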